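/- arXiv:2105.10660 — 4 statements merged into one kernel-verified Lean document; each statement's English description precedes it below -/
import Mathlib

section
/- Let X be a complete metric space and let S, T : X → X be maps such that S is μ-Lipschitz, T is a λ-homothety (i.e. dist(T x, T y) = λ · dist(x, y) for all x, y), μ < λ, and S(X) ⊆ T(X). Then there exists a unique point x ∈ X such that T(x) = S(x). -/
/-- **A fixed point theorem** (Proposition 3.1).
If `X` is a complete (nonempty) metric space, `S : X → X` is `μ`-Lipschitz,
`T : X → X` is a `λ`-homothety with `μ < λ`, and `S(X) ⊆ T(X)`, then there
is a unique `x` with `T x = S x`. -/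
theorem fixed_point_krasnoselskii {X : Type*} [MetricSpace X] [CompleteSpace X] [Nonempty X]
    (S T : X → X) (μ lam : ℝ)
    (hS : ∀ x y, dist (S x) (S y) ≤ μ * dist x y)
    (hT : ∀ x y, dist (T x) (T y) = lam * dist x y)
    (hμlam : μ < lam)
    (hrange : Set.range S ⊆ Set.range T) :
    ∃! x : X, T x = S x := by
  -- Uniqueness is straightforward.
  have huniq : ∀ x y : X, T x = S x → T y = S y → y = x := by
    intro x y hx hy
    have h1 : lam * dist y x ≤ μ * dist y x := by
      calc lam * dist y x = dist (T y) (T x) := (hT y x).symm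
        _ = dist (S y) (S x) := by rw [hx, hy]
        _ ≤ μ * dist y x := hS y x
    by_contra hne
    have hd : 0 < dist y x := dist_pos.mpr hne
    nlinarith
  by_cases hsub : ∀ a b : X, a = b
  · obtain ⟨x⟩ := ‹Nonempty X›
    exact ⟨x, hsub _ _, fun y _ => hsub y x⟩
  · push_neg at hsub
    obtain ⟨a, b, hab⟩ := hsub
    have hd : 0 < dist a b := dist_pos.mpr hab
    have hμ0 : 0 ≤ μ := by
      have h1 : 0 ≤ μ * dist a b := le_trans dist_nonneg (hS a b)
      nlinarith
    have hlam0 : 0 < lam := lt_of_le_of_lt hμ0 hμlam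
    -- define g : X → X with T (g x) = S x
    have hg : ∀ x : X, ∃ z : X, T z = S x := fun x => hrange ⟨x, rfl⟩
    choose g hgT using hg
    -- g is a contraction with constant μ / lam
    set K : NNReal := ⟨μ / lam, div_nonneg hμ0 hlam0.le⟩ with hK
    have hK1 : K < 1 := by
      rw [← NNReal.coe_lt_coe]
      exact (div_lt_one hlam0).mpr hμlam
    have hlip : LipschitzWith K g := by
      refine LipschitzWith.of_dist_le_mul fun x y => ?_
      have h1 : lam * dist (g x) (g y) ≤ μ * dist x y := by
        calc lam * dist (g x) (g y) = dist (T (g x)) (T (g y)) := (hT _ _).symm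
          _ = dist (S x) (S y) := by rw [hgT, hgT]
          _ ≤ μ * dist x y := hS x y
      have : (K : ℝ) = μ / lam := rfl
      rw [this, div_mul_eq_mul_div, le_div_iff₀ hlam0]
      nlinarith
    have hctr : ContractingWith K g := ⟨hK1, hlip⟩
    refine ⟨hctr.fixedPoint g, ?_, fun y hy => huniq _ y ?_ hy⟩
    · have hfix : g (hctr.fixedPoint g) = hctr.fixedPoint g := hctr.fixedPoint_isFixedPt
      calc T (hctr.fixedPoint g) = T (g (hctr.fixedPoint g)) := by rw [hfix]
        _ = S (hctr.fixedPoint g) := hgT _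
    · have hfix : g (hctr.fixedPoint g) = hctr.fixedPoint g := hctr.fixedPoint_isFixedPt
      calc T (hctr.fixedPoint g) = T (g (hctr.fixedPoint g)) := by rw [hfix]
        _ = S (hctr.fixedPoint g) := hgT _
end

section
/- Let G be a linearly ordered abelian group and let F : ℕ → Set G be an increasing sequence of well-ordered subsets (for the order) such that each Fₙ is closed under addition (a semigroup). Suppose there exists an element w ∈ F₁ with w > 0 such that for every n and every x ∈ F_{n+1} \ Fₙ one has x ≥ (n+1)·w − n·w₀ for a fixed element w₀ with w > w₀ ≥ 0, and the order on G is Archimedean with respect to w − w₀ (i.e. for every g ∈ G there is n with n·(w − w₀) > g). Then the union W = ⋃ₙ Fₙ is well-ordered. -/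
/-- An increasing union of well-ordered sub-semigroups of a linearly ordered abelian
group is well-ordered, provided the "new" elements at stage `n+1` are bounded below by
`(n+1) • w − n • w₀` where `w > w₀ ≥ 0` and the order is Archimedean with respect to
`w − w₀`. -/
theorem union_wellOrdered_of_layered_bound {G : Type*} [AddCommGroup G] [LinearOrder G] [IsOrderedAddMonoid G]
    (F : ℕ → Set G) (hmono : Monotone F)
    (hwf : ∀ n, (F n).IsWF)
    (hsemi : ∀ n, ∀ x ∈ F n, ∀ y ∈ F n, x + y ∈ F n)
    (w w₀ : G) (hwF : w ∈ F 1) (hwpos : 0 < w)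
    (hw₀nonneg : 0 ≤ w₀) (hw₀lt : w₀ < w)
    (hbound : ∀ n : ℕ, ∀ x ∈ F (n + 1) \ F n, (n + 1) • w - n • w₀ ≤ x)
    (harch : ∀ g : G, ∃ n : ℕ, g < n • (w - w₀)) :
    (⋃ n, F n).IsWF := by
  rw [Set.isWF_iff_no_descending_seq]
  intro f hf hmem
  obtain ⟨M, hM⟩ := harch (f 0 - w)
  -- every f n lies in F M
  have key : ∀ n, f n ∈ F M := by
    intro n
    have hfn : f n ≤ f 0 := hf.antitone (Nat.zero_le n)
    obtain ⟨_, ⟨k, rfl⟩, hk⟩ := hmem n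
    -- take least k
    obtain ⟨m, hm, hmin⟩ := Nat.lt_wfRel.wf.has_min {k | f n ∈ F k} ⟨k, hk⟩
    rcases le_or_gt m M with h | h
    · exact hmono h hm
    · exfalso
      obtain ⟨m, rfl⟩ : ∃ m', m = m' + 1 := ⟨m - 1, by omega⟩
      have hnot : f n ∉ F m := fun hmem' => hmin m hmem' (Nat.lt_succ_self m)
      have hb := hbound m (f n) ⟨hm, hnot⟩
      have heq : (m + 1) • w - m • w₀ = w + m • (w - w₀) := by
        rw [smul_sub, succ_nsmul]; abel
      have hMm : M • (w - w₀) ≤ m • (w - w₀) :=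
        nsmul_le_nsmul_left (sub_nonneg.2 hw₀lt.le) (by omega)
      have : f 0 < f n := by
        calc f 0 = (f 0 - w) + w := by abel
        _ < M • (w - w₀) + w := add_lt_add_left hM w
        _ ≤ m • (w - w₀) + w := add_le_add_left hMm w
        _ = (m + 1) • w - m • w₀ := by rw [heq]; abel
        _ ≤ f n := hb
      exact absurd hfn (not_le.2 this)
  exact Set.isWF_iff_no_descending_seq.1 (hwf M) f hf key
end

section
/- Equip ℝ × ℤ with the lexicographic order. Let W₁ ⊆ ℝ_{>1} × ℤ be a well-ordered sub-semigroup, and define inductively W_{n+1} as the semigroup generated by Wₙ together with all elements of the form (β₁ + ⋯ + β_{n+1} − n, m₁ + ⋯ + m_{n+1}) where (βᵢ, mᵢ) ∈ Wₙ and βᵢ > 1 for each i. Then the union W = ⋃ₙ Wₙ is well-ordered, and W satisfies: for all (β₁,m₁),…,(β_r,m_r) ∈ W ∩ (ℝ_{>1} × ℤ) with r ≥ 2, the element (β₁ + ⋯ + β_r − (r−1), m₁ + ⋯ + m_r) belongs to W. -/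
open Finset Set Pointwise

section PropAux

/-- The constant `(1,0)` in the lexicographic product. -/
noncomputable abbrev auxCC : ℝ ×ₗ ℤ := toLex ((1 : ℝ), (0 : ℤ))

lemma aux_lex_conv (s : Set (ℝ × ℤ)) :
    (toLex '' s).IsWF ↔ s.WellFoundedOn (Prod.Lex (· < ·) (· < ·)) := by
  rw [Set.IsWF, Set.wellFoundedOn_image]
  rfl

lemma aux_cc_pos : (0 : ℝ ×ₗ ℤ) < auxCC := by
  show toLex ((0:ℝ),(0:ℤ)) < toLex ((1:ℝ),(0:ℤ))
  rw [Prod.Lex.lt_iff]; left; norm_num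

/-- Neumann's lemma, subsemigroup version. -/
lemma aux_neumann (s : Set (ℝ ×ₗ ℤ)) (hs : s.IsPWO) (hpos : ∀ x ∈ s, 0 ≤ x) :
    (AddSubsemigroup.closure s : Set (ℝ ×ₗ ℤ)).IsPWO := by
  refine (Set.IsPWO.addSubmonoid_closure hpos hs).mono ?_
  exact fun x hx =>
    (AddSubsemigroup.closure_le.mpr (AddSubmonoid.subset_closure
      (M := ℝ ×ₗ ℤ)) : AddSubsemigroup.closure s ≤ (AddSubmonoid.closure s).toAddSubsemigroup) hx

lemma aux_nsmul_one0 (k : ℕ) : k • (((1:ℝ),(0:ℤ)) : ℝ × ℤ) = ((k : ℝ), (0 : ℤ)) := by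
  induction k with
  | zero => simp; rfl
  | succ k ih => rw [succ_nsmul, ih]; push_cast; rfl

lemma aux_snoc_sum_fst {n : ℕ} (f : Fin n → ℝ × ℤ) (y : ℝ × ℤ) :
    ∑ i : Fin (n + 1), ((Fin.snoc f y : Fin (n+1) → ℝ × ℤ) i).1
      = (∑ i : Fin n, (f i).1) + y.1 := by
  rw [Fin.sum_univ_castSucc]
  simp

lemma aux_snoc_sum_snd {n : ℕ} (f : Fin n → ℝ × ℤ) (y : ℝ × ℤ) :
    ∑ i : Fin (n + 1), ((Fin.snoc f y : Fin (n+1) → ℝ × ℤ) i).2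
      = (∑ i : Fin n, (f i).2) + y.2 := by
  rw [Fin.sum_univ_castSucc]
  simp

variable (W : ℕ → Set (ℝ × ℤ))
  (hW1wf : (W 1).WellFoundedOn (Prod.Lex (· < ·) (· < ·)))
  (hW1sub : W 1 ⊆ {p : ℝ × ℤ | 1 < p.1})
  (hW1semi : ∀ x ∈ W 1, ∀ y ∈ W 1, x + y ∈ W 1)
  (hWsucc : ∀ n : ℕ, 1 ≤ n →
      W (n + 1) = (AddSubsemigroup.closure (W n ∪
        {p : ℝ × ℤ | ∃ f : Fin (n + 1) → ℝ × ℤ,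
          (∀ i, f i ∈ W n ∧ 1 < (f i).1) ∧
          p = (∑ i, (f i).1 - (n : ℝ), ∑ i, (f i).2)}) : Set (ℝ × ℤ)))

include hW1sub hWsucc in
lemma aux_gt_one : ∀ n : ℕ, W (n + 1) ⊆ {p : ℝ × ℤ | 1 < p.1} := by
  intro n
  induction n with
  | zero => exact hW1sub
  | succ a ih =>
    rw [hWsucc (a + 1) (by omega)]
    intro x hx
    induction hx using AddSubsemigroup.closure_induction with
    | mem z hz =>
      rcases hz with hz | ⟨f, hf, rfl⟩
      · exact ih hz
      · have h1 : ∀ i, 1 < (f i).1 := fun i => (hf i).2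
        have : (a + 1 + 1 : ℝ) < ∑ i : Fin (a + 1 + 1), (f i).1 := by
          calc (a + 1 + 1 : ℝ) = ∑ _i : Fin (a + 1 + 1), (1 : ℝ) := by
                simp
            _ < _ := by
                apply Finset.sum_lt_sum_of_nonempty
                · exact Finset.univ_nonempty
                · exact fun i _ => h1 i
        simp only [Set.mem_setOf_eq]
        push_cast
        linarith
    | add x y hx hy ihx ihy =>
      have : (1:ℝ) < x.1 + y.1 := by
        simp only [Set.mem_setOf_eq] at ihx ihy; linarith
      exact this.trans_le (le_of_eq rfl)

include hWsucc in
lemma aux_mono : ∀ m n : ℕ, m ≤ n → W (m + 1) ⊆ W (n + 1) := by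
  intro m n h
  induction n with
  | zero => simp [Nat.le_zero.mp h]
  | succ b ih =>
    rcases Nat.lt_or_ge m (b+1) with h' | h'
    · refine (ih (by omega)).trans ?_
      rw [hWsucc (b + 1) (by omega)]
      exact (Set.subset_union_left).trans AddSubsemigroup.subset_closure
    · have : m = b + 1 := by omega
      subst this; exact le_refl _

include hW1semi hWsucc in
lemma aux_add_mem :
    ∀ n : ℕ, ∀ x ∈ W (n + 1), ∀ y ∈ W (n + 1), x + y ∈ W (n + 1) := by
  intro n
  cases n with
  | zero => exact hW1semi
  | succ a =>
    rw [hWsucc (a + 1) (by omega)]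
    intro x hx y hy
    exact AddSubsemigroup.add_mem _ hx hy

include hW1sub hW1semi hWsucc in
lemma aux_circ : ∀ a : ℕ, ∀ x ∈ W (a + 1), ∀ y ∈ W (a + 1),
    ((x.1 + y.1 - 1, x.2 + y.2) : ℝ × ℤ) ∈ W (a + 2) := by
  have hgt := aux_gt_one W hW1sub hWsucc
  have hmono := aux_mono W hWsucc
  have hadd := aux_add_mem W hW1semi hWsucc
  intro a
  induction a with
  | zero =>
    intro x hx y hy
    rw [hWsucc 1 le_rfl]
    apply AddSubsemigroup.subset_closure
    right
    refine ⟨![x, y], fun i => ?_, ?_⟩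
    · fin_cases i <;> exact ⟨‹_›, hW1sub ‹_›⟩
    · simp [Fin.sum_univ_two]
  | succ a ih =>
    intro x hx y hy
    have gen_mem : ∀ (g : Fin (a + 3) → ℝ × ℤ), (∀ i, g i ∈ W (a + 2) ∧ 1 < (g i).1) →
        ((∑ i, (g i).1 - ((a + 2 : ℕ) : ℝ), ∑ i, (g i).2) : ℝ × ℤ) ∈ W (a + 3) := by
      intro g hg
      rw [hWsucc (a + 2) (by omega)]
      exact AddSubsemigroup.subset_closure (Or.inr ⟨g, hg, rfl⟩)
    have hW3 : W (a + 3) = (AddSubsemigroup.closure (W (a+2) ∪ _) : Set (ℝ × ℤ)) :=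
      hWsucc (a + 2) (by omega)
    rw [hWsucc (a + 1) (by omega)] at hx
    induction hx using AddSubsemigroup.closure_induction with
    | mem z hz =>
      rcases hz with hz | ⟨f, hf, rfl⟩
      · rw [hWsucc (a + 1) (by omega)] at hy
        induction hy using AddSubsemigroup.closure_induction with
        | mem w hw =>
          rcases hw with hw | ⟨f, hf, rfl⟩
          · exact hmono (a + 1) (a + 2) (by omega) (ih z hz w hw)
          · have := gen_mem (Fin.snoc f z) ?_
            · convert this using 2
              · simp only [aux_snoc_sum_fst]; push_cast [Prod.fst]; ring_nf
              · first
                | (simp only [aux_snoc_sum_snd]; ring_nf; try simp; try ring)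
                | (simp only [aux_snoc_sum_snd]; ring_nf)
                | simp only [aux_snoc_sum_snd]
            · intro i
              refine Fin.lastCases ?_ (fun j => ?_) i
              · simpa using ⟨hmono a (a+1) (by omega) hz, hgt a hz⟩
              · simpa using ⟨hmono a (a+1) (by omega) (hf j).1, (hf j).2⟩
        | add u v hu hv ihu ihv =>
          have h1 : u ∈ W (a + 3) := by
            rw [hW3]
            exact AddSubsemigroup.subset_closure
              (Or.inl (by rw [hWsucc (a+1) (by omega)]; exact hu))
          have := hadd (a + 2) u h1 _ ihv
          convert this using 2 <;> simp <;> ring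
      · have := gen_mem (Fin.snoc f y) ?_
        · convert this using 2
          · simp only [aux_snoc_sum_fst]; push_cast [Prod.fst]; ring_nf
          · first
            | (simp only [aux_snoc_sum_snd]; ring_nf; try simp; try ring)
            | (simp only [aux_snoc_sum_snd]; ring_nf)
            | simp only [aux_snoc_sum_snd]
        · intro i
          refine Fin.lastCases ?_ (fun j => ?_) i
          · simpa using ⟨hy, hgt (a+1) hy⟩
          · simpa using ⟨hmono a (a+1) (by omega) (hf j).1, (hf j).2⟩
    | add u v hu hv ihu ihv =>
      have h1 : u ∈ W (a + 3) := by
        rw [hW3]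
        exact AddSubsemigroup.subset_closure
          (Or.inl (by rw [hWsucc (a+1) (by omega)]; exact hu))
      have := hadd (a + 2) u h1 _ ihv
      convert this using 2 <;> simp <;> ring

include hW1sub hW1semi hWsucc in
lemma aux_op : ∀ r N : ℕ, ∀ f : Fin (r + 2) → ℝ × ℤ, (∀ i, f i ∈ W (N + 1)) →
    ((∑ i, (f i).1 - ((r : ℝ) + 1), ∑ i, (f i).2) : ℝ × ℤ) ∈ W (N + r + 2) := by
  have hmono := aux_mono W hWsucc
  have hcirc := aux_circ W hW1sub hW1semi hWsucc
  intro r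
  induction r with
  | zero =>
    intro N f hf
    have := hcirc N (f 0) (hf 0) (f 1) (hf 1)
    convert this using 2 <;> simp [Fin.sum_univ_two]
  | succ r ih =>
    intro N f hf
    have hprev := ih N (fun i => f i.castSucc) (fun i => hf _)
    have hlast : f (Fin.last (r + 2)) ∈ W (N + r + 2) :=
      hmono N (N + r + 1) (by omega) (hf _)
    have := hcirc (N + r + 1) _ hprev _ hlast
    have heq : ((∑ i : Fin (r + 3), (f i).1 - ((r : ℝ) + 1 + 1),
          ∑ i : Fin (r + 3), (f i).2) : ℝ × ℤ)
        = (((∑ i : Fin (r+2), (f i.castSucc).1 - ((r:ℝ)+1),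
              ∑ i : Fin (r+2), (f i.castSucc).2) : ℝ × ℤ).1
            + (f (Fin.last (r+2))).1 - 1,
           ((∑ i : Fin (r+2), (f i.castSucc).1 - ((r:ℝ)+1),
              ∑ i : Fin (r+2), (f i.castSucc).2) : ℝ × ℤ).2
            + (f (Fin.last (r+2))).2) := by
      rw [Prod.ext_iff]
      constructor
      · simp [Fin.sum_univ_castSucc]; ring
      · simp [Fin.sum_univ_castSucc]
    have h3 : N + (r + 1) + 2 = N + r + 1 + 2 := by omega
    rw [h3]
    push_cast
    rw [heq]
    exact this

include hW1wf hW1sub hWsucc in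
lemma aux_wf : (⋃ n, W (n + 1)).WellFoundedOn (Prod.Lex (· < ·) (· < ·)) := by
  set V : Set (ℝ ×ₗ ℤ) := (toLex '' W 1) + {-auxCC} with hVdef
  have hW1pwo : (toLex '' W 1).IsPWO := ((aux_lex_conv _).mpr hW1wf).isPWO
  have hVpwo : V.IsPWO := hW1pwo.add (Set.isPWO_singleton _)
  have hVpos : ∀ v ∈ V, 0 < v := by
    rintro v hv
    rw [hVdef, Set.mem_add] at hv
    obtain ⟨a, ⟨x, hx, rfl⟩, b, hb, rfl⟩ := hv
    rw [Set.mem_singleton_iff] at hb; subst hb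
    have h1 : 1 < x.1 := hW1sub hx
    have : toLex x + -auxCC = toLex ((x.1 - 1, x.2) : ℝ × ℤ) := by
      show toLex (x + -((1:ℝ),(0:ℤ))) = _
      congr 1
      ext <;> simp <;> ring
    rw [this]
    show toLex ((0:ℝ),(0:ℤ)) < _
    rw [Prod.Lex.lt_iff]; left; simpa using h1
  set CV := AddSubsemigroup.closure V with hCVdef
  have hCVpwo : (CV : Set (ℝ ×ₗ ℤ)).IsPWO := aux_neumann V hVpwo (fun x hx => (hVpos x hx).le)
  have hCVpos : ∀ v ∈ CV, 0 < v := by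
    intro v hv
    induction hv using AddSubsemigroup.closure_induction with
    | mem z hz => exact hVpos z hz
    | add u w _ _ ihu ihw => exact add_pos ihu ihw
  set T : Set (ℝ ×ₗ ℤ) := (CV : Set (ℝ ×ₗ ℤ)) + {auxCC} with hTdef
  have hTpwo : T.IsPWO := hCVpwo.add (Set.isPWO_singleton _)
  have hTpos : ∀ t ∈ T, 0 < t := by
    rintro t ht
    rw [hTdef, Set.mem_add] at ht
    obtain ⟨a, ha, b, hb, rfl⟩ := ht
    rw [Set.mem_singleton_iff] at hb; subst hb
    exact add_pos (hCVpos a ha) aux_cc_pos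
  set A := AddSubsemigroup.closure T with hAdef
  have hApwo : (A : Set (ℝ ×ₗ ℤ)).IsPWO := aux_neumann T hTpwo (fun x hx => (hTpos x hx).le)
  have circA : ∀ p ∈ A, ∀ q ∈ A, p + q - auxCC ∈ A := by
    intro p hp q hq
    induction hp, hq using AddSubsemigroup.closure_induction₂ with
    | mem u w hu hw =>
      rw [hTdef, Set.mem_add] at hu hw
      obtain ⟨a, ha, b, hb, rfl⟩ := hu
      obtain ⟨a', ha', b', hb', rfl⟩ := hw
      rw [Set.mem_singleton_iff] at hb hb'; subst hb; subst hb'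
      have : a + auxCC + (a' + auxCC) - auxCC = (a + a') + auxCC := by abel
      rw [this]
      exact AddSubsemigroup.subset_closure
        (Set.add_mem_add (AddSubsemigroup.add_mem _ ha ha') (Set.mem_singleton _))
    | add_left u w z hu hw hz ihu ihw =>
      have : u + w + z - auxCC = u + (w + z - auxCC) := by abel
      rw [this]
      exact AddSubsemigroup.add_mem _ hu ihw
    | add_right u w z hz hu hw ihu ihw =>
      have : z + (u + w) - auxCC = u + (z + w - auxCC) := by abel
      rw [this]
      exact AddSubsemigroup.add_mem _ hz ihw
  have opA : ∀ r : ℕ, ∀ g : Fin (r + 1) → ℝ ×ₗ ℤ, (∀ i, g i ∈ A) →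
      (∑ i, g i) - r • auxCC ∈ A := by
    intro r
    induction r with
    | zero => intro g hg; simpa [Fin.sum_univ_one] using hg 0
    | succ r ih =>
      intro g hg
      have hprev := ih (fun i => g i.castSucc) (fun i => hg _)
      have : (∑ i, g i) - (r + 1) • auxCC
          = ((∑ i : Fin (r + 1), g i.castSucc) - r • auxCC)
              + g (Fin.last (r + 1)) - auxCC := by
        rw [Fin.sum_univ_castSucc, succ_nsmul]; abel
      rw [this]
      exact circA _ hprev _ (hg _)
  have main : ∀ n : ℕ, ∀ x ∈ W (n + 1), toLex x ∈ A := by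
    intro n
    induction n with
    | zero =>
      intro x hx
      have h1 : toLex x + -auxCC ∈ V := by
        rw [hVdef]
        exact Set.add_mem_add (Set.mem_image_of_mem _ hx) (Set.mem_singleton _)
      have h2 : toLex x = (toLex x + -auxCC) + auxCC := by abel
      rw [h2]
      exact AddSubsemigroup.subset_closure
        (Set.add_mem_add (AddSubsemigroup.subset_closure h1) (Set.mem_singleton _))
    | succ n ih =>
      intro x hx
      rw [hWsucc (n + 1) (by omega)] at hx
      induction hx using AddSubsemigroup.closure_induction with
      | mem z hz =>
        rcases hz with hz | ⟨f, hf, rfl⟩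
        · exact ih z hz
        · have heq : toLex ((∑ i : Fin (n+2), (f i).1 - ((n+1 : ℕ) : ℝ),
              ∑ i : Fin (n+2), (f i).2) : ℝ × ℤ)
              = (∑ i : Fin (n+2), toLex (f i)) - (n+1) • auxCC := by
            have h1 : ((∑ i : Fin (n+2), (f i).1 - ((n+1 : ℕ) : ℝ),
                ∑ i : Fin (n+2), (f i).2) : ℝ × ℤ)
                = (∑ i : Fin (n+2), f i) - (n+1) • (((1:ℝ),(0:ℤ)) : ℝ × ℤ) := by
              rw [aux_nsmul_one0]
              ext
              · simp [Prod.fst_sum]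
              · simp [Prod.snd_sum]
            rw [h1]
            rfl
          rw [heq]
          exact opA (n + 1) (fun i => toLex (f i)) (fun i => ih (f i) (hf i).1)
      | add u w hu hw ihu ihw =>
        exact AddSubsemigroup.add_mem _ ihu ihw
  rw [← aux_lex_conv]
  refine (hApwo.mono ?_).isWF
  rintro _ ⟨x, hx, rfl⟩
  rw [Set.mem_iUnion] at hx
  obtain ⟨n, hn⟩ := hx
  exact main n x hn

end PropAux

open Finset in
/-- Proposition 5.2 of the paper (case `k = 1`). `ℝ × ℤ` carries the lexicographic
order. Starting from a well-ordered sub-semigroup `W₁ ⊆ ℝ_{>1} × ℤ`, define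
`W_{n+1}` as the semigroup generated by `Wₙ` together with all elements
`(β₁ + ⋯ + β_{n+1} − n, m₁ + ⋯ + m_{n+1})` with `(βᵢ, mᵢ) ∈ Wₙ`, `βᵢ > 1`.
Then the union `W = ⋃ₙ Wₙ` is well-ordered and is closed under the operation
`(β₁,m₁),…,(β_r,m_r) ↦ (β₁ + ⋯ + β_r − (r−1), m₁ + ⋯ + m_r)` for `r ≥ 2` and
elements with first coordinate `> 1`. -/
theorem union_semigroups_wellOrdered
    (W : ℕ → Set (ℝ × ℤ))
    (hW1wf : (W 1).WellFoundedOn (Prod.Lex (· < ·) (· < ·)))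
    (hW1sub : W 1 ⊆ {p : ℝ × ℤ | 1 < p.1})
    (hW1semi : ∀ x ∈ W 1, ∀ y ∈ W 1, x + y ∈ W 1)
    (hWsucc : ∀ n : ℕ, 1 ≤ n →
      W (n + 1) = (AddSubsemigroup.closure (W n ∪
        {p : ℝ × ℤ | ∃ f : Fin (n + 1) → ℝ × ℤ,
          (∀ i, f i ∈ W n ∧ 1 < (f i).1) ∧
          p = (∑ i, (f i).1 - (n : ℝ), ∑ i, (f i).2)}) : Set (ℝ × ℤ))) :
    (⋃ n, W (n + 1)).WellFoundedOn (Prod.Lex (· < ·) (· < ·)) ∧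
    ∀ r : ℕ, 2 ≤ r → ∀ f : Fin r → ℝ × ℤ,
      (∀ i, f i ∈ (⋃ n, W (n + 1)) ∧ 1 < (f i).1) →
      ((∑ i, (f i).1 - ((r : ℝ) - 1), ∑ i, (f i).2) : ℝ × ℤ) ∈ ⋃ n, W (n + 1) := by
  constructor
  · exact aux_wf W hW1wf hW1sub hWsucc
  · intro r hr f hf
    obtain ⟨r', rfl⟩ : ∃ r', r = r' + 2 := ⟨r - 2, by omega⟩
    have hex : ∀ i, ∃ n, f i ∈ W (n + 1) := fun i => Set.mem_iUnion.mp (hf i).1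
    choose g hg using hex
    set N := Finset.univ.sup g with hN
    have hfi : ∀ i, f i ∈ W (N + 1) := fun i =>
      aux_mono W hWsucc (g i) N (Finset.le_sup (Finset.mem_univ i)) (hg i)
    have hop := aux_op W hW1sub hW1semi hWsucc r' N f hfi
    rw [Set.mem_iUnion]
    refine ⟨N + r' + 1, ?_⟩
    have heq : ((r' + 2 : ℕ) : ℝ) - 1 = (r' : ℝ) + 1 := by push_cast; ring
    rw [heq]
    exact hop
end

section
/- Let k ∈ ℕ and let 𝓛ₖ be the set of functions f : ℝ_{≥0} × ℤᵏ → ℝ whose support is well-ordered for the lexicographic order. Define d_z(f, g) = 2^{−ord_z(f − g)} for f ≠ g (where ord_z(h) is the minimum of the first coordinates of elements of the support of h) and d_z(f, f) = 0. Then (𝓛ₖ, d_z) is a complete metric space. -/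
/-- The lexicographic order relation on `ℝ × ℤᵏ`. -/
def rlex (k : ℕ) : (ℝ × (Fin k → ℤ)) → (ℝ × (Fin k → ℤ)) → Prop :=
  Prod.Lex (· < ·) (Pi.Lex (· < ·) (@fun _ => (· < ·)))

/-- `f` represents an element of `𝓛ₖ`: its support is well-ordered for the
lexicographic order and is contained in `ℝ_{≥0} × ℤᵏ`. -/
def memL (k : ℕ) (f : ℝ × (Fin k → ℤ) → ℝ) : Prop :=
  {p | f p ≠ 0}.WellFoundedOn (rlex k) ∧ ∀ p, f p ≠ 0 → 0 ≤ p.1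

open scoped Classical in
/-- The valuation distance `d_z(f,g) = 2^{-ord_z(f-g)}`, where `ord_z` is the least
first coordinate appearing in the support of `f - g`. -/
noncomputable def dz (k : ℕ) (f g : ℝ × (Fin k → ℤ) → ℝ) : ℝ :=
  if f = g then 0
  else (2 : ℝ) ^ (-sInf {x : ℝ | ∃ m : Fin k → ℤ, f (x, m) ≠ g (x, m)})

private lemma rlex_fst_le {k : ℕ} {p q : ℝ × (Fin k → ℤ)} (h : rlex k p q) : p.1 ≤ q.1 := by
  have : Prod.Lex (· < ·) (Pi.Lex (· < ·) (@fun _ => (· < ·))) p q := h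
  rcases Prod.lex_iff.mp this with h1 | ⟨h1, _⟩
  · exact le_of_lt h1
  · exact le_of_eq h1

private lemma supp_nonempty {k : ℕ} {f g : ℝ × (Fin k → ℤ) → ℝ} (h : f ≠ g) :
    {x : ℝ | ∃ m : Fin k → ℤ, f (x, m) ≠ g (x, m)}.Nonempty := by
  by_contra hc
  rw [Set.not_nonempty_iff_eq_empty, Set.eq_empty_iff_forall_notMem] at hc
  apply h
  funext p
  by_contra hne
  exact hc p.1 ⟨p.2, hne⟩

private lemma supp_bdd {k : ℕ} {f g : ℝ × (Fin k → ℤ) → ℝ} (hf : memL k f) (hg : memL k g) :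
    BddBelow {x : ℝ | ∃ m : Fin k → ℤ, f (x, m) ≠ g (x, m)} := by
  refine ⟨0, fun x hx => ?_⟩
  obtain ⟨m, hm⟩ := hx
  by_cases h : f (x, m) = 0
  · exact hg.2 (x, m) (fun hg0 => hm (h.trans hg0.symm))
  · exact hf.2 (x, m) h

private lemma dz_nonneg {k : ℕ} (f g : ℝ × (Fin k → ℤ) → ℝ) : 0 ≤ dz k f g := by
  rw [dz]
  split_ifs
  · exact le_rfl
  · exact le_of_lt (Real.rpow_pos_of_pos two_pos _)

private lemma dz_self {k : ℕ} (f : ℝ × (Fin k → ℤ) → ℝ) : dz k f f = 0 := by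
  rw [dz, if_pos rfl]

/-- If the distance is below `2^(-x)`, the functions agree at all points with
first coordinate at most `x`. -/
private lemma agree_of_dz_lt {k : ℕ} {f g : ℝ × (Fin k → ℤ) → ℝ} (hf : memL k f)
    (hg : memL k g) {x : ℝ} (h : dz k f g < (2 : ℝ) ^ (-x)) :
    ∀ p : ℝ × (Fin k → ℤ), p.1 ≤ x → f p = g p := by
  intro p hp
  by_cases hfg : f = g
  · rw [hfg]
  rw [dz, if_neg hfg] at h
  have hlt : -sInf {x : ℝ | ∃ m : Fin k → ℤ, f (x, m) ≠ g (x, m)} < -x :=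
    (Real.rpow_lt_rpow_left_iff one_lt_two).mp h
  by_contra hne
  have hmem : p.1 ∈ {x : ℝ | ∃ m : Fin k → ℤ, f (x, m) ≠ g (x, m)} := ⟨p.2, hne⟩
  have := csInf_le (supp_bdd hf hg) hmem
  linarith

/-- If the functions agree at all points with first coordinate at most `x`,
the distance is at most `2^(-x)`. -/
private lemma dz_le_of_agree {k : ℕ} {f g : ℝ × (Fin k → ℤ) → ℝ} {x : ℝ}
    (hx : ∀ p : ℝ × (Fin k → ℤ), p.1 ≤ x → f p = g p) :
    dz k f g ≤ (2 : ℝ) ^ (-x) := by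
  rw [dz]
  split_ifs with h
  · exact le_of_lt (Real.rpow_pos_of_pos two_pos _)
  · rw [Real.rpow_le_rpow_left_iff one_lt_two, neg_le_neg_iff]
    refine le_csInf (supp_nonempty h) (fun b hb => ?_)
    obtain ⟨m, hm⟩ := hb
    by_contra hbx
    push_neg at hbx
    exact hm (hx (b, m) (le_of_lt hbx))

/-- Proposition 3.5: `(𝓛ₖ, d_z)` is a complete metric space. -/
theorem Lk_complete_metric (k : ℕ) :
    (∀ f g, memL k f → memL k g → (dz k f g = 0 ↔ f = g)) ∧
    (∀ f g, dz k f g = dz k g f) ∧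
    (∀ f g h, memL k f → memL k g → memL k h → dz k f h ≤ dz k f g + dz k g h) ∧
    (∀ u : ℕ → (ℝ × (Fin k → ℤ) → ℝ), (∀ n, memL k (u n)) →
      (∀ ε > 0, ∃ N : ℕ, ∀ m ≥ N, ∀ n ≥ N, dz k (u m) (u n) < ε) →
      ∃ f, memL k f ∧ ∀ ε > 0, ∃ N : ℕ, ∀ n ≥ N, dz k (u n) f < ε) := by
  refine ⟨?_, ?_, ?_, ?_⟩
  · -- dz = 0 ↔ eq
    intro f g _ _
    constructor
    · intro h
      by_contra hne
      rw [dz, if_neg hne] at h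
      exact absurd h (ne_of_gt (Real.rpow_pos_of_pos two_pos _))
    · intro h
      rw [dz, if_pos h]
  · -- symmetry
    intro f g
    rw [dz, dz]
    by_cases h : f = g
    · rw [if_pos h, if_pos h.symm]
    · rw [if_neg h, if_neg (Ne.symm h)]
      have hset : {x : ℝ | ∃ m : Fin k → ℤ, f (x, m) ≠ g (x, m)} =
          {x : ℝ | ∃ m : Fin k → ℤ, g (x, m) ≠ f (x, m)} := by
        ext x; simp [ne_comm]
      rw [hset]
  · -- triangle inequality
    intro f g h hf hg hh
    by_cases hfh : f = h
    · rw [dz, if_pos hfh]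
      exact add_nonneg (dz_nonneg f g) (dz_nonneg g h)
    by_cases hfg : f = g
    · subst hfg
      rw [dz_self, zero_add]
    by_cases hgh : g = h
    · subst hgh
      rw [dz_self, add_zero]
    set A := {x : ℝ | ∃ m : Fin k → ℤ, f (x, m) ≠ g (x, m)} with hA
    set B := {x : ℝ | ∃ m : Fin k → ℤ, g (x, m) ≠ h (x, m)} with hB
    set C := {x : ℝ | ∃ m : Fin k → ℤ, f (x, m) ≠ h (x, m)} with hC
    have hmin : min (sInf A) (sInf B) ≤ sInf C := by
      refine le_csInf (supp_nonempty hfh) (fun x hx => ?_)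
      obtain ⟨m, hm⟩ := hx
      by_cases hmid : f (x, m) = g (x, m)
      · have : x ∈ B := ⟨m, fun he => hm (hmid.trans he)⟩
        exact (min_le_right _ _).trans (csInf_le (supp_bdd hg hh) this)
      · exact (min_le_left _ _).trans (csInf_le (supp_bdd hf hg) (⟨m, hmid⟩ : x ∈ A))
    rw [dz, if_neg hfh, dz, if_neg hfg, dz, if_neg hgh]
    have h1 : (2 : ℝ) ^ (-sInf C) ≤ (2 : ℝ) ^ (-(min (sInf A) (sInf B))) :=
      (Real.rpow_le_rpow_left_iff one_lt_two).mpr (neg_le_neg hmin)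
    refine h1.trans ?_
    rcases le_total (sInf A) (sInf B) with hab | hab
    · rw [min_eq_left hab]
      exact le_add_of_nonneg_right (le_of_lt (Real.rpow_pos_of_pos two_pos _))
    · rw [min_eq_right hab]
      exact le_add_of_nonneg_left (le_of_lt (Real.rpow_pos_of_pos two_pos _))
  · -- completeness
    intro u hu hcauchy
    have key : ∀ x : ℝ, ∃ N : ℕ, ∀ m ≥ N, ∀ n ≥ N,
        ∀ p : ℝ × (Fin k → ℤ), p.1 ≤ x → u m p = u n p := by
      intro x
      obtain ⟨N, hN⟩ := hcauchy ((2 : ℝ) ^ (-x)) (Real.rpow_pos_of_pos two_pos _)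
      exact ⟨N, fun m hm n hn => agree_of_dz_lt (hu m) (hu n) (hN m hm n hn)⟩
    choose N hN using key
    set f : ℝ × (Fin k → ℤ) → ℝ := fun p => u (N p.1) p with hfdef
    have star : ∀ x : ℝ, ∀ n ≥ N x, ∀ p : ℝ × (Fin k → ℤ), p.1 ≤ x → u n p = f p := by
      intro x n hn p hp
      have h1 : u n p = u (max (N x) (N p.1)) p :=
        hN x n hn _ (le_max_left _ _) p hp
      have h2 : u (N p.1) p = u (max (N x) (N p.1)) p :=
        hN p.1 _ le_rfl _ (le_max_right _ _) p le_rfl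
      rw [h1, ← h2]
    have hfmem : memL k f := by
      constructor
      · -- well-foundedness
        rw [Set.wellFoundedOn_iff, WellFounded.wellFounded_iff_has_min]
        intro t ht
        by_cases hts : (t ∩ {p | f p ≠ 0}).Nonempty
        · obtain ⟨q, hqt, hqf⟩ := hts
          set x₀ := q.1 with hx₀
          set t' := {p ∈ t | f p ≠ 0 ∧ p.1 ≤ x₀} with ht'def
          have ht' : t'.Nonempty := ⟨q, hqt, hqf, le_rfl⟩
          have hwf := (hu (N x₀)).1
          rw [Set.wellFoundedOn_iff, WellFounded.wellFounded_iff_has_min] at hwf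
          obtain ⟨m, hmt', hmin⟩ := hwf t' ht'
          refine ⟨m, hmt'.1, ?_⟩
          rintro p hp ⟨hlex, hpf, hmf⟩
          have hm1 : m.1 ≤ x₀ := hmt'.2.2
          have hp1 : p.1 ≤ m.1 := rlex_fst_le hlex
          have hpx : p.1 ≤ x₀ := hp1.trans hm1
          have hpu : u (N x₀) p ≠ 0 := by
            rw [star x₀ (N x₀) le_rfl p hpx]; exact hpf
          have hmu : u (N x₀) m ≠ 0 := by
            rw [star x₀ (N x₀) le_rfl m hm1]; exact hmf
          exact hmin p ⟨hp, hpf, hpx⟩ ⟨hlex, hpu, hmu⟩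
        · obtain ⟨q, hq⟩ := ht
          exact ⟨q, hq, fun x hx hr => hts ⟨q, hq, hr.2.2⟩⟩
      · intro p hp
        exact (hu (N p.1)).2 p hp
    refine ⟨f, hfmem, ?_⟩
    intro ε hε
    obtain ⟨R, hR⟩ : ∃ R : ℕ, (2 : ℝ) ^ (-(R : ℝ)) < ε := by
      obtain ⟨R, hR⟩ := exists_pow_lt_of_lt_one hε (by norm_num : (1 : ℝ) / 2 < 1)
      refine ⟨R, ?_⟩
      rw [Real.rpow_neg (by norm_num), Real.rpow_natCast]
      calc ((2 : ℝ) ^ R)⁻¹ = ((1 : ℝ) / 2) ^ R := by rw [one_div, inv_pow]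
      _ < ε := hR
    exact ⟨N R, fun n hn =>
      lt_of_le_of_lt (dz_le_of_agree (fun p hp => star R n hn p hp)) hR⟩
end
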